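/- Let 0<q<1, a≥0 and b≥1 integers, and n a positive integer. Then H_n^*[{2}^a, 1, {2}^b] = -∑_{k=1}^n ((1+q^k)/[k]_q^{2(a+b)+1}) ([n choose k]_q/[n+k choose k]_q) (-1)^k q^{k(k+1)/2+(a+b)k} - ∑_{k=1}^n ((1+q^k)/[k]_q^{2a+1}) ([n choose k]_q/[n+k choose k]_q) q^{k^2+ak} ∑_{j=1}^{k-1} (-1)^j (1+q^j) q^{bj - j(j+1)/2}/[j]_q^{2b}. -/

import Mathlib

open Finset

/-- q-analogue of a natural number: [m]_q = (1-q^m)/(1-q). -/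
noncomputable def qnum (q : ℝ) (m : ℕ) : ℝ := (1 - q ^ m) / (1 - q)

/-- q-Pochhammer (q;q)_n = ∏_{k=0}^{n-1} (1 - q^{k+1}). -/
noncomputable def qPoch (q : ℝ) (n : ℕ) : ℝ := ∏ k ∈ Finset.range n, (1 - q ^ (k + 1))

/-- Gaussian q-binomial coefficient, 0 when m > n. -/
noncomputable def qbinom (q : ℝ) (n m : ℕ) : ℝ :=
  if m ≤ n then qPoch q n / (qPoch q m * qPoch q (n - m)) else 0

/-- q-multiple harmonic star sum H_n^*[s₁,…,s_m]. -/
noncomputable def qHstar (q : ℝ) : List ℕ → ℕ → ℝ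
  | [], _ => 1
  | s :: rest, n => ∑ k ∈ Finset.Icc 1 n, q ^ k / qnum q k ^ s * qHstar q rest k

/-- q-multiple zeta star value ζ_q^*[s₁,…,s_m]. -/
noncomputable def qZetaStar (q : ℝ) : List ℕ → ℝ
  | [] => 1
  | s :: rest => ∑' k : ℕ, q ^ (k + 1) / qnum q (k + 1) ^ s * qHstar q rest (k + 1)

/-- strict multiple harmonic sum ∑_{n ≥ k₁ > … > k_r ≥ 1} ∏ 1/k_j^{p_j}. -/
noncomputable def Hstrict : List ℕ → ℕ → ℝ
  | [], _ => 1
  | p :: rest, n => ∑ k ∈ Finset.Icc 1 n, (1 : ℝ) / (k : ℝ) ^ p * Hstrict rest (k - 1)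

/-- binomial-weighted strict multiple harmonic sum Ĥ_n(p). -/
noncomputable def Hhat : List ℕ → ℕ → ℝ
  | [], _ => 1
  | p :: rest, n => ∑ k ∈ Finset.Icc 1 n,
      ((n.choose k : ℝ) / ((n + k).choose n)) * ((1 : ℝ) / (k : ℝ) ^ p) * Hstrict rest (k - 1)

/-- ordinary multiple harmonic star sum H_n^*(s₁,…,s_m). -/
noncomputable def HstarO : List ℕ → ℕ → ℝ
  | [], _ => 1
  | s :: rest, n => ∑ k ∈ Finset.Icc 1 n, (1 : ℝ) / (k : ℝ) ^ s * HstarO rest k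

/-- ordinary multiple zeta star value. -/
noncomputable def zetaStarO : List ℕ → ℝ
  | [] => 1
  | s :: rest => ∑' k : ℕ, (1 : ℝ) / ((k : ℝ) + 1) ^ s * HstarO rest (k + 1)

/-- Merge a list of parts according to a comma(true)/plus(false) pattern. -/
def mergeComp : ℕ → List ℕ → List Bool → List ℕ
  | a, [], _ => [a]
  | a, _ :: _, [] => [a]
  | a, b :: t, true :: bs => a :: mergeComp b t bs
  | a, b :: t, false :: bs => mergeComp (a + b) t bs


section Aux


/-- the basic weight c_k^(n). -/
noncomputable def ccw (q : ℝ) (n k : ℕ) : ℝ := qbinom q n k / qbinom q (n + k) k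

lemma one_sub_qpow_pos {q : ℝ} (hq0 : 0 < q) (hq1 : q < 1) (i : ℕ) (hi : 1 ≤ i) : 0 < 1 - q ^ i := by
  have : q ^ i < 1 := pow_lt_one₀ hq0.le hq1 (by omega)
  linarith

lemma qPoch_pos {q : ℝ} (hq0 : 0 < q) (hq1 : q < 1) (n : ℕ) : 0 < qPoch q n := by
  unfold qPoch
  exact Finset.prod_pos fun i _ => one_sub_qpow_pos hq0 hq1 (i+1) (by omega)

lemma qPoch_ne {q : ℝ} (hq0 : 0 < q) (hq1 : q < 1) (n : ℕ) : qPoch q n ≠ 0 := (qPoch_pos hq0 hq1 n).ne'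

lemma qPoch_succ (n : ℕ) : qPoch q (n + 1) = qPoch q n * (1 - q ^ (n + 1)) := by
  unfold qPoch; rw [Finset.prod_range_succ]

lemma qPoch_zero : qPoch q (0:ℕ) = 1 := by unfold qPoch; simp

lemma qnum_pos {q : ℝ} (hq0 : 0 < q) (hq1 : q < 1) (m : ℕ) (hm : 1 ≤ m) : 0 < qnum q m := by
  unfold qnum
  exact div_pos (by linarith [one_sub_qpow_pos hq0 hq1 m hm]) (by linarith)

lemma qnum_ne {q : ℝ} (hq0 : 0 < q) (hq1 : q < 1) (m : ℕ) (hm : 1 ≤ m) : qnum q m ≠ 0 := (qnum_pos hq0 hq1 m hm).ne'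

lemma ccw_of_le {q : ℝ} (hq0 : 0 < q) (hq1 : q < 1) {n k : ℕ} (h : k ≤ n) :
    ccw q n k = qPoch q n ^ 2 / (qPoch q (n - k) * qPoch q (n + k)) := by
  unfold ccw qbinom
  rw [if_pos h, if_pos (by omega : k ≤ n + k)]
  have h2 : n + k - k = n := by omega
  rw [h2]
  have p1 := qPoch_ne hq0 hq1 k
  have p2 := qPoch_ne hq0 hq1 (n - k)
  have p3 := qPoch_ne hq0 hq1 n
  have p4 := qPoch_ne hq0 hq1 (n + k)
  field_simp

lemma ccw_of_gt {n k : ℕ} (h : n < k) : ccw q n k = 0 := by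
  unfold ccw qbinom
  rw [if_neg (by omega)]
  simp

lemma ccw_pos {q : ℝ} (hq0 : 0 < q) (hq1 : q < 1) {n k : ℕ} (h : k ≤ n) : 0 < ccw q n k := by
  rw [ccw_of_le hq0 hq1 h]
  exact div_pos (pow_pos (qPoch_pos hq0 hq1 n) 2)
    (mul_pos (qPoch_pos hq0 hq1 (n-k)) (qPoch_pos hq0 hq1 (n+k)))

lemma ccw_diff {q : ℝ} (hq0 : 0 < q) (hq1 : q < 1) {m l : ℕ} (hl : 1 ≤ l) (hlm : l ≤ m + 1) :
    ccw q (m+1) l - ccw q m l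
      = ccw q (m+1) l * q ^ (m + 1 - l) * (1 - q ^ l) ^ 2 / (1 - q ^ (m+1)) ^ 2 := by
  have hα : (1 - q ^ (m+1)) ≠ 0 := (one_sub_qpow_pos hq0 hq1 (m+1) (by omega)).ne'
  rcases Nat.lt_or_ge m l with hcase | hcase
  · -- l = m + 1
    have : l = m + 1 := by omega
    subst this
    rw [show ccw q m (m+1) = 0 from ccw_of_gt (Nat.lt_succ_self m), Nat.sub_self]
    field_simp
    simp
  · -- l ≤ m
    have e3 : (m+1) - l = (m-l)+1 := by omega
    have e4 : (m+1) + l = (m+l)+1 := by omega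
    have e1 : q^(m+1) = q^(m-l+1) * q^l := by rw [← pow_add]; congr 1; omega
    have e2 : q^(m+l+1) = q^(m-l+1) * q^l * q^l := by rw [← pow_add, ← pow_add]; congr 1; omega
    rw [ccw_of_le hq0 hq1 hlm, ccw_of_le hq0 hq1 hcase, e3, e4, qPoch_succ, qPoch_succ, qPoch_succ]
    rw [e1, e2]
    have hβ : (1 - q ^ (m-l+1)) ≠ 0 := (one_sub_qpow_pos hq0 hq1 _ (by omega)).ne'
    have hγ : (1 - q ^ (m-l+1) * q^l * q^l) ≠ 0 := by
      have := (one_sub_qpow_pos hq0 hq1 (m+l+1) (by omega)).ne'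
      rwa [e2] at this
    have hα' : (1 - q ^ (m-l+1) * q^l) ≠ 0 := by rwa [e1] at hα
    have p1 := qPoch_ne hq0 hq1 m
    have p2 := qPoch_ne hq0 hq1 (m - l)
    have p3 := qPoch_ne hq0 hq1 (m + l)
    generalize q ^ (m-l+1) = A at hβ hγ hα' ⊢
    generalize q ^ l = B at hβ hγ hα' ⊢
    have hγ' : 1 - A * B ^ 2 ≠ 0 := by rw [pow_two, ← mul_assoc]; exact hγ
    field_simp
    ring

lemma stepL1 {q : ℝ} (hq0 : 0 < q) (hq1 : q < 1) (m k : ℕ) (hk : 1 ≤ k) :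
    q^(m+1) / (qnum q (m+1))^2 * ccw q (m+1) k
      = q^k / (qnum q k)^2 * (ccw q (m+1) k - ccw q m k) := by
  rcases Nat.lt_or_ge (m+1) k with hcase | hcase
  · rw [ccw_of_gt hcase, ccw_of_gt (by omega)]
    simp
  · rw [ccw_diff hq0 hq1 hk hcase]
    unfold qnum
    have e : q^(m+1) = q^(m+1-k) * q^k := by rw [← pow_add]; congr 1; omega
    rw [e]
    have hα : (1 - q ^ (m+1-k) * q^k) ≠ 0 := by
      have := (one_sub_qpow_pos hq0 hq1 (m+1) (by omega)).ne'
      rwa [e] at this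
    have hδ : (1 - q ^ k) ≠ 0 := (one_sub_qpow_pos hq0 hq1 k hk).ne'
    have hq' : (1 - q) ≠ 0 := by linarith
    field_simp

lemma sumL1 {q : ℝ} (hq0 : 0 < q) (hq1 : q < 1) (k : ℕ) (hk : 1 ≤ k) (n : ℕ) :
    ∑ m ∈ Finset.Icc 1 n, q^m / (qnum q m)^2 * ccw q m k
      = q^k / (qnum q k)^2 * ccw q n k := by
  induction n with
  | zero => rw [ccw_of_gt (by omega)]; simp
  | succ n ih =>
      rw [Finset.sum_Icc_succ_top (by omega), ih, stepL1 hq0 hq1 n k hk]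
      ring

lemma ccw_step_down {q : ℝ} (hq0 : 0 < q) (hq1 : q < 1) {N j : ℕ} (hj : j + 1 ≤ N) :
    ccw q N j * (1 - q^(N - j)) = ccw q N (j+1) * (1 - q^(N + j + 1)) := by
  have e3 : N - j = (N - (j+1)) + 1 := by omega
  have e4 : N + (j+1) = (N + j) + 1 := by omega
  rw [ccw_of_le hq0 hq1 (by omega : j ≤ N), ccw_of_le hq0 hq1 hj, e4, e3,
      qPoch_succ, qPoch_succ]
  have p1 := qPoch_ne hq0 hq1 N
  have p2 := qPoch_ne hq0 hq1 (N - (j+1))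
  have p3 := qPoch_ne hq0 hq1 (N + j)
  have h1 : (1 - q ^ (N - (j+1) + 1)) ≠ 0 := (one_sub_qpow_pos hq0 hq1 _ (by omega)).ne'
  have h2 : (1 - q ^ (N + j + 1)) ≠ 0 := (one_sub_qpow_pos hq0 hq1 _ (by omega)).ne'
  field_simp

lemma core {q : ℝ} (hq0 : 0 < q) (hq1 : q < 1) (k N : ℕ) (hk : 1 ≤ k) (hkN : k ≤ N) :
    ∑ l ∈ Finset.Icc (k+1) N, (1 - q^(2*l)) * q^(l*(l-1)) * ccw q N l
      = q^(k*k+k) * (1 - q^(N-k)) * ccw q N k := by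
  set g : ℕ → ℝ := fun l => q^(l*(l-1)) * (1 - q^(N+1-l)) * ccw q N (l-1) with hg
  have hpt : ∀ l, 1 ≤ l → l ≤ N →
      g l - g (l+1) = (1 - q^(2*l)) * q^(l*(l-1)) * ccw q N l := by
    intro l hl1 hlN
    obtain ⟨j, rfl⟩ : ∃ j, l = j + 1 := ⟨l - 1, by omega⟩
    simp only [hg]
    have e1 : N + 1 - (j+1+1) = N - (j+1) := by omega
    have e2 : N + 1 - (j+1) = N - j := by omega
    have e3 : (j+1+1) * (j+1+1-1) = (j+1)*(j+1-1) + 2*(j+1) := by simp; ring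
    have e4 : q ^ ((j+1)*(j+1-1) + 2*(j+1)) = q^((j+1)*(j+1-1)) * q^(2*(j+1)) := pow_add q _ _
    have e5 : q^(2*(j+1)) * q^(N - (j+1)) = q^(N + (j+1)) := by rw [← pow_add]; congr 1; omega
    rw [e1, e2, e3, e4]
    simp only [Nat.add_sub_cancel]
    have step := ccw_step_down hq0 hq1 (q := q) (N := N) (j := j) (by omega)
    calc q ^ ((j+1) * j) * (1 - q ^ (N - j)) * ccw q N j
          - q ^ ((j+1) * j) * q ^ (2*(j+1)) * (1 - q ^ (N - (j+1))) * ccw q N (j+1)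
        = q ^ ((j+1) * j) * (ccw q N j * (1 - q ^ (N - j)))
          - q ^ ((j+1) * j) * q ^ (2*(j+1)) * (1 - q ^ (N - (j+1))) * ccw q N (j+1) := by ring
      _ = q ^ ((j+1) * j) * (ccw q N (j+1) * (1 - q^(N+j+1)))
          - q ^ ((j+1) * j) * q ^ (2*(j+1)) * (1 - q ^ (N - (j+1))) * ccw q N (j+1) := by rw [step]
      _ = (1 - q ^ (2 * (j+1))) * q ^ ((j+1) * j) * ccw q N (j+1) := by
            have e6 : q^(2*(j+1)) * q^(N - (j+1)) = q^(N+j+1) := by rw [← pow_add]; congr 1; omega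
            rw [← e6]; ring
  have htel : ∑ i ∈ Finset.range (N+1-(k+1)), (g (k+1+i) - g (k+1+(i+1))) = g (k+1) - g (N+1) := by
    rw [Finset.sum_range_sub' (fun i => g (k+1+i)) (N+1-(k+1))]
    have e0 : k+1+0 = k+1 := by omega
    have e1 : k+1+(N+1-(k+1)) = N+1 := by omega
    rw [e0, e1]
  have hsum : ∑ l ∈ Finset.Icc (k+1) N, (1 - q^(2*l)) * q^(l*(l-1)) * ccw q N l
      = g (k+1) - g (N+1) := by
    rw [← Finset.Ico_add_one_right_eq_Icc, Finset.sum_Ico_eq_sum_range, ← htel]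
    apply Finset.sum_congr rfl
    intro i hi
    rw [Finset.mem_range] at hi
    exact (hpt (k+1+i) (by omega) (by omega)).symm
  rw [hsum]
  have hgN : g (N+1) = 0 := by simp only [hg, Nat.sub_self]; simp
  have hgk : g (k+1) = q^(k*k+k) * (1 - q^(N-k)) * ccw q N k := by
    simp only [hg, Nat.add_sub_cancel]
    rw [show (k+1)*k = k*k+k from by ring, show N+1-(k+1) = N-k from by omega]
  rw [hgN, hgk]; ring

lemma term_eq {q : ℝ} (hq0 : 0 < q) (hq1 : q < 1) (m k l : ℕ) (hl1 : k+1 ≤ l) (hl2 : l ≤ m+1) :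
    (ccw q (m+1) l - ccw q m l) * ((1+q^l)/(qnum q l)) * q^(l*l - k*k)
      = ((1-q)*q^(m+1) / ((1-q^(m+1))^2 * q^(k*k)))
        * ((1-q^(2*l)) * q^(l*(l-1)) * ccw q (m+1) l) := by
  rw [ccw_diff hq0 hq1 (by omega) hl2]
  unfold qnum
  have hsq : l*l = l*(l-1)+l := by
    cases l with
    | zero => simp
    | succ j => simp only [Nat.succ_sub_one]; ring
  have hkl : k*k ≤ l*l := Nat.mul_le_mul (by omega) (by omega)
  have h4 : q^(k*k) ≠ 0 := pow_ne_zero _ hq0.ne'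
  have E1 : q^(l*l-k*k) = q^(l*(l-1)) * q^l / q^(k*k) := by
    rw [eq_div_iff h4, ← pow_add, ← pow_add, Nat.sub_add_cancel hkl]
    exact congrArg (q ^ ·) hsq
  have E2 : q^(m+1) = q^(m+1-l) * q^l := by rw [← pow_add]; congr 1; omega
  have E3 : q^(2*l) = q^l * q^l := by rw [two_mul, pow_add]
  rw [E1, E2, E3]
  have h1 : (1 - q^l) ≠ 0 := (one_sub_qpow_pos hq0 hq1 l (by omega)).ne'
  have h2 : (1 - q^(m+1-l) * q^l) ≠ 0 := by
    have := (one_sub_qpow_pos hq0 hq1 (m+1) (by omega)).ne'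
    rwa [E2] at this
  have h3 : (1-q) ≠ 0 := by linarith
  field_simp
  ring

lemma stepL3 {q : ℝ} (hq0 : 0 < q) (hq1 : q < 1) (m k : ℕ) (hk : 1 ≤ k) :
    q^(m+1) / (qnum q (m+1)) * ccw q (m+1) k
      = q^k / (qnum q k) * (ccw q (m+1) k - ccw q m k)
        + ∑ l ∈ Finset.Icc (k+1) (m+1),
            (ccw q (m+1) l - ccw q m l) * ((1+q^l)/(qnum q l)) * q^(l*l - k*k) := by
  rcases Nat.lt_or_ge (m+1) k with hcase | hcase
  · rw [show ccw q (m+1) k = 0 from ccw_of_gt hcase,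
        show ccw q m k = 0 from ccw_of_gt (by omega),
        Finset.Icc_eq_empty (by omega)]
    simp
  · have hrw : ∑ l ∈ Finset.Icc (k+1) (m+1),
        (ccw q (m+1) l - ccw q m l) * ((1+q^l)/(qnum q l)) * q^(l*l - k*k)
        = ((1-q)*q^(m+1) / ((1-q^(m+1))^2 * q^(k*k)))
          * ∑ l ∈ Finset.Icc (k+1) (m+1), (1-q^(2*l)) * q^(l*(l-1)) * ccw q (m+1) l := by
      rw [Finset.mul_sum]
      apply Finset.sum_congr rfl
      intro l hl
      rw [Finset.mem_Icc] at hl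
      exact term_eq hq0 hq1 m k l hl.1 hl.2
    rw [hrw, core hq0 hq1 k (m+1) hk hcase, ccw_diff hq0 hq1 hk hcase]
    unfold qnum
    have E2 : q^(m+1) = q^(m+1-k) * q^k := by rw [← pow_add]; congr 1; omega
    have E4 : q^(k*k+k) = q^(k*k) * q^k := pow_add q _ _
    rw [E2, E4]
    have h1 : (1 - q^k) ≠ 0 := (one_sub_qpow_pos hq0 hq1 k hk).ne'
    have h2 : (1 - q^(m+1-k) * q^k) ≠ 0 := by
      have := (one_sub_qpow_pos hq0 hq1 (m+1) (by omega)).ne'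
      rwa [E2] at this
    have h3 : (1-q) ≠ 0 := by linarith
    have h4 : q^(k*k) ≠ 0 := pow_ne_zero _ hq0.ne'
    field_simp
    ring

lemma sumL3 {q : ℝ} (hq0 : 0 < q) (hq1 : q < 1) (k : ℕ) (hk : 1 ≤ k) (n : ℕ) :
    ∑ m ∈ Finset.Icc 1 n, q^m / (qnum q m) * ccw q m k
      = q^k / (qnum q k) * ccw q n k
        + ∑ l ∈ Finset.Icc (k+1) n, ccw q n l * ((1+q^l)/(qnum q l)) * q^(l*l - k*k) := by
  induction n with
  | zero =>
      rw [show ccw q 0 k = 0 from ccw_of_gt (by omega), Finset.Icc_eq_empty (by omega)]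
      simp
  | succ n ih =>
      rw [Finset.sum_Icc_succ_top (by omega), ih, stepL3 hq0 hq1 n k hk]
      have hext : ∑ l ∈ Finset.Icc (k+1) (n+1), ccw q n l * ((1+q^l)/(qnum q l)) * q^(l*l-k*k)
          = ∑ l ∈ Finset.Icc (k+1) n, ccw q n l * ((1+q^l)/(qnum q l)) * q^(l*l-k*k) := by
        rcases le_or_gt (k+1) (n+1) with h | h
        · rw [Finset.sum_Icc_succ_top h, show ccw q n (n+1) = 0 from ccw_of_gt (Nat.lt_succ_self n)]
          simp
        · rw [Finset.Icc_eq_empty (by omega), Finset.Icc_eq_empty (by omega)]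
      simp only [sub_mul, Finset.sum_sub_distrib]
      rw [hext]
      ring

lemma qbinom_self {q : ℝ} (hq0 : 0 < q) (hq1 : q < 1) (m : ℕ) : qbinom q m m = 1 := by
  unfold qbinom
  rw [if_pos le_rfl, Nat.sub_self, qPoch_zero, mul_one, div_self (qPoch_ne hq0 hq1 m)]

lemma qbinom_zero {q : ℝ} (hq0 : 0 < q) (hq1 : q < 1) (m : ℕ) : qbinom q m 0 = 1 := by
  unfold qbinom
  rw [if_pos (Nat.zero_le m), qPoch_zero, Nat.sub_zero, one_mul, div_self (qPoch_ne hq0 hq1 m)]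

lemma qbinom_of_gt {q : ℝ} {m j : ℕ} (h : m < j) : qbinom q m j = 0 := by
  unfold qbinom; rw [if_neg (by omega)]

lemma pascal {q : ℝ} (hq0 : 0 < q) (hq1 : q < 1) (m j : ℕ) :
    qbinom q (m+1) (j+1) = qbinom q m (j+1) + q^(m-j) * qbinom q m j := by
  rcases Nat.lt_or_ge j m with hlt | hge
  · -- j + 1 ≤ m
    unfold qbinom
    rw [if_pos (by omega), if_pos (by omega), if_pos (by omega)]
    have e1 : m + 1 - (j+1) = (m - (j+1)) + 1 := by omega
    have e2 : m - (j+1) + 1 = m - j := by omega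
    have e3 : m - j = (m - (j+1)) + 1 := by omega
    rw [e1, qPoch_succ, qPoch_succ, e3, qPoch_succ]
    have E : q^(m+1) = q^(m-(j+1)+1) * q^(j+1) := by rw [← pow_add]; congr 1; omega
    rw [E]
    have p1 := qPoch_ne hq0 hq1 m
    have p2 := qPoch_ne hq0 hq1 j
    have p3 := qPoch_ne hq0 hq1 (m - (j+1))
    have h1 : (1 - q^(m-(j+1)+1)) ≠ 0 := (one_sub_qpow_pos hq0 hq1 _ (by omega)).ne'
    have h2 : (1 - q^(j+1)) ≠ 0 := (one_sub_qpow_pos hq0 hq1 _ (by omega)).ne'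
    field_simp
    ring
  · rcases Nat.eq_or_lt_of_le hge with heq | hlt2
    · subst heq
      rw [qbinom_self hq0 hq1, qbinom_of_gt (by omega), qbinom_self hq0 hq1, Nat.sub_self]
      simp
    · rw [qbinom_of_gt (by omega), qbinom_of_gt (by omega), qbinom_of_gt (by omega)]
      simp

lemma tri_succ (j : ℕ) : (j+1)*j/2 = j*(j-1)/2 + j := by
  cases j with
  | zero => simp
  | succ i =>
      have h : (i+1+1)*(i+1) = (i+1)*i + (i+1)*2 := by ring
      rw [h, Nat.add_mul_div_right _ _ (by norm_num : 0 < 2), Nat.succ_sub_one]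

lemma gauss_add (a : ℕ) : ∀ b : ℕ, (a+b)*((a+b)-1)/2 = a*(a-1)/2 + b*(b-1)/2 + a*b := by
  intro b
  induction b with
  | zero => simp
  | succ b ih =>
      have e1 : a + (b+1) = (a+b) + 1 := by omega
      rw [e1]
      simp only [Nat.add_sub_cancel]
      rw [tri_succ (a+b), ih, tri_succ b]
      ring

lemma half_sq (k : ℕ) : k*(k-1)/2 + k*(k+1)/2 = k*k := by
  have t1 : k*(k+1)/2 = k*(k-1)/2 + k := by rw [mul_comm k (k+1)]; exact tri_succ k
  have hd : 2 ∣ k*(k-1) := by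
    cases k with
    | zero => simp
    | succ j => rw [Nat.succ_sub_one, mul_comm]; exact (Nat.even_mul_succ_self j).two_dvd
  have t2 : k*(k-1)/2 * 2 = k*(k-1) := Nat.div_mul_cancel hd
  have t3 : k*(k-1) + k = k*k := by
    cases k with
    | zero => simp
    | succ j => rw [Nat.succ_sub_one]; ring
  rw [t1]
  generalize hB : k*(k-1)/2 = B at t2 ⊢
  generalize hC : k*(k-1) = C at t2 t3
  generalize hD : k*k = D at t3 ⊢
  omega

lemma qbt {q : ℝ} (hq0 : 0 < q) (hq1 : q < 1) (z : ℝ) :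
    ∀ m : ℕ, ∑ j ∈ Finset.range (m+1), (-1:ℝ)^j * q^(j*(j-1)/2) * z^j * qbinom q m j
      = ∏ i ∈ Finset.range m, (1 - z * q^i) := by
  intro m
  induction m with
  | zero =>
      rw [Finset.sum_range_one, Finset.prod_range_zero, qbinom_self hq0 hq1]
      simp
  | succ m ih =>
      have hpt : ∀ j : ℕ,
          (-1:ℝ)^(j+1) * q^((j+1)*((j+1)-1)/2) * z^(j+1) * qbinom q (m+1) (j+1)
          = (-1:ℝ)^(j+1) * q^((j+1)*((j+1)-1)/2) * z^(j+1) * qbinom q m (j+1)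
            - z * q^m * ((-1:ℝ)^j * q^(j*(j-1)/2) * z^j * qbinom q m j) := by
        intro j
        simp only [Nat.add_sub_cancel]
        rw [pascal hq0 hq1 m j]
        rcases le_or_gt j m with hjm | hjm
        · have E : q^((j+1)*j/2) * q^(m-j) = q^(j*(j-1)/2) * q^m := by
            rw [← pow_add, ← pow_add, tri_succ j]
            congr 1
            generalize j*(j-1)/2 = a
            omega
          linear_combination ((-1:ℝ)^(j+1) * z^(j+1) * qbinom q m j) * E
        · rw [qbinom_of_gt hjm, qbinom_of_gt (by omega : m < j + 1)]
          ring
      have h0 : ∀ M : ℕ, (-1:ℝ)^0 * q^(0*(0-1)/2) * z^0 * qbinom q M 0 = 1 := by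
        intro M; rw [qbinom_zero hq0 hq1]; norm_num
      rw [Finset.prod_range_succ, ← ih, Finset.sum_range_succ' _ (m+1)]
      rw [Finset.sum_congr rfl (fun j _ => hpt j), Finset.sum_sub_distrib, h0]
      have hshift : ∑ j ∈ Finset.range (m+1),
          (-1:ℝ)^(j+1) * q^((j+1)*((j+1)-1)/2) * z^(j+1) * qbinom q m (j+1)
          = (∑ j ∈ Finset.range (m+1), (-1:ℝ)^j * q^(j*(j-1)/2) * z^j * qbinom q m j) - 1 := by
        simp only [Nat.add_sub_cancel]
        have h1 : ∑ j ∈ Finset.range (m+2), (-1:ℝ)^j * q^(j*(j-1)/2) * z^j * qbinom q m j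
            = (∑ j ∈ Finset.range (m+1),
                (-1:ℝ)^(j+1) * q^((j+1)*((j+1)-1)/2) * z^(j+1) * qbinom q m (j+1))
              + (-1:ℝ)^0 * q^(0*(0-1)/2) * z^0 * qbinom q m 0 :=
          Finset.sum_range_succ' _ (m+1)
        have h2 : ∑ j ∈ Finset.range (m+2), (-1:ℝ)^j * q^(j*(j-1)/2) * z^j * qbinom q m j
            = (∑ j ∈ Finset.range (m+1), (-1:ℝ)^j * q^(j*(j-1)/2) * z^j * qbinom q m j)
              + (-1:ℝ)^(m+1) * q^((m+1)*m/2) * z^(m+1) * qbinom q m (m+1) := by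
          have := Finset.sum_range_succ
            (fun j => (-1:ℝ)^j * q^(j*(j-1)/2) * z^j * qbinom q m j) (m+1)
          simpa using this
        rw [h2, qbinom_of_gt (Nat.lt_succ_self m)] at h1
        rw [h0 m] at h1
        simp only [Nat.add_sub_cancel] at h1
        have := h1.symm
        linarith [this]
      rw [hshift, ← Finset.mul_sum]
      ring

lemma qbinom_pos {q : ℝ} (hq0 : 0 < q) (hq1 : q < 1) {m j : ℕ} (h : j ≤ m) :
    0 < qbinom q m j := by
  unfold qbinom
  rw [if_pos h]
  exact div_pos (qPoch_pos hq0 hq1 m)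
    (mul_pos (qPoch_pos hq0 hq1 j) (qPoch_pos hq0 hq1 (m-j)))

lemma L2 {q : ℝ} (hq0 : 0 < q) (hq1 : q < 1) (n : ℕ) (hn : 1 ≤ n) :
    ∑ k ∈ Finset.Icc 1 n, (-1:ℝ)^k * (1+q^k) * q^(k*(k-1)/2) * ccw q n k = -1 := by
  have hq0' : q ≠ 0 := hq0.ne'
  set z : ℝ := (q^n)⁻¹ with hzdef
  set f : ℕ → ℝ := fun j => (-1:ℝ)^j * q^(j*(j-1)/2) * z^j * qbinom q (2*n) j with hf
  have hz_ne : z ≠ 0 := inv_ne_zero (pow_ne_zero n hq0')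
  have hzero : ∑ j ∈ Finset.range (2*n+1), f j = 0 := by
    simp only [hf]
    rw [qbt hq0 hq1 z (2*n)]
    apply Finset.prod_eq_zero (i := n) (by rw [Finset.mem_range]; omega)
    rw [hzdef, inv_mul_cancel₀ (pow_ne_zero n hq0')]
    ring
  have hsplit : ∑ j ∈ Finset.range (2*n+1), f j
      = f n + ∑ k ∈ Finset.Icc 1 n, (f (n-k) + f (n+k)) := by
    have h1 : (∑ j ∈ Finset.Ico 0 (n+1), f j) + ∑ j ∈ Finset.Ico (n+1) (2*n+1), f j
        = ∑ j ∈ Finset.Ico 0 (2*n+1), f j :=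
      Finset.sum_Ico_consecutive f (by omega) (by omega)
    have h3 : ∑ j ∈ Finset.range n, f j = ∑ k ∈ Finset.Icc 1 n, f (n-k) := by
      rw [← Finset.sum_range_reflect]
      rw [← Finset.Ico_add_one_right_eq_Icc, Finset.sum_Ico_eq_sum_range]
      apply Finset.sum_congr (by congr 1)
      intro i _
      congr 1
      omega
    have h4 : ∑ j ∈ Finset.Ico (n+1) (2*n+1), f j = ∑ k ∈ Finset.Icc 1 n, f (n+k) := by
      rw [Finset.sum_Ico_eq_sum_range, ← Finset.Ico_add_one_right_eq_Icc, Finset.sum_Ico_eq_sum_range]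
      apply Finset.sum_congr (by congr 1 <;> omega)
      intro i _
      congr 1
      omega
    rw [← Finset.range_eq_Ico, ← Finset.range_eq_Ico] at h1
    rw [← h1, Finset.sum_range_succ, h3, h4, Finset.sum_add_distrib]
    ring
  have hterm : ∀ k, 1 ≤ k → k ≤ n →
      f (n-k) + f (n+k) = f n * ((-1:ℝ)^k * (1+q^k) * q^(k*(k-1)/2) * ccw q n k) := by
    intro k hk1 hkn
    have hb1 : qbinom q (2*n) (n+k) = qbinom q (2*n) n * ccw q n k := by
      rw [ccw_of_le hq0 hq1 hkn]
      unfold qbinom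
      rw [if_pos (by omega), if_pos (by omega),
          show 2*n - (n+k) = n-k from by omega, show 2*n - n = n from by omega]
      have p2n := qPoch_ne hq0 hq1 (2*n)
      have pn := qPoch_ne hq0 hq1 n
      have pnk := qPoch_ne hq0 hq1 (n-k)
      have pnk2 := qPoch_ne hq0 hq1 (n+k)
      field_simp
    have hb2 : qbinom q (2*n) (n-k) = qbinom q (2*n) (n+k) := by
      unfold qbinom
      rw [if_pos (by omega), if_pos (by omega),
          show 2*n - (n-k) = n+k from by omega, show 2*n - (n+k) = n-k from by omega,
          mul_comm (qPoch q (n-k)) (qPoch q (n+k))]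
    have u1 : (-1:ℝ)^k * (-1)^k = 1 := by rw [← mul_pow]; norm_num
    have T1 : (n+k)*((n+k)-1)/2 = n*(n-1)/2 + k*(k-1)/2 + n*k := gauss_add n k
    have Gnk := gauss_add (n-k) k
    rw [Nat.sub_add_cancel hkn] at Gnk
    have hM : (n-k)*k + k*k = n*k := by
      rw [← Nat.add_mul, Nat.sub_add_cancel hkn]
    have hE5 := half_sq k
    have E3' : k*(k+1)/2 = k*(k-1)/2 + k := by rw [mul_comm k (k+1)]; exact tri_succ k
    have T2 : (n-k)*((n-k)-1)/2 + n*k = n*(n-1)/2 + k*(k-1)/2 + k := by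
      generalize hA : (n-k)*((n-k)-1)/2 = A at Gnk ⊢
      generalize hB : n*(n-1)/2 = B at Gnk ⊢
      generalize hC : k*(k-1)/2 = C at Gnk hE5 E3' ⊢
      generalize hC' : k*(k+1)/2 = C' at hE5 E3'
      generalize hD : k*k = D at hM hE5
      generalize hF : n*k = F at hM ⊢
      generalize hG : (n-k)*k = G at Gnk hM
      omega
    have EA1 : q^((n+k)*((n+k)-1)/2) = q^(n*(n-1)/2) * q^(k*(k-1)/2) * q^(n*k) := by
      rw [← pow_add, ← pow_add, T1]
    have EA2 : q^((n-k)*((n-k)-1)/2)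
        = q^(n*(n-1)/2) * q^(k*(k-1)/2) * q^k / q^(n*k) := by
      rw [eq_div_iff (pow_ne_zero _ hq0'), ← pow_add, ← pow_add, ← pow_add, T2]
    have EB1 : z^(n+k) = z^n * z^k := pow_add z n k
    have EB2 : z^(n-k) = z^n / z^k := by
      rw [eq_div_iff (pow_ne_zero _ hz_ne), ← pow_add, Nat.sub_add_cancel hkn]
    have ES1 : (-1:ℝ)^(n+k) = (-1)^n * (-1)^k := pow_add _ n k
    have ES2 : (-1:ℝ)^(n-k) = (-1)^n * (-1)^k := by
      have h := pow_add (-1:ℝ) (n-k) k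
      rw [Nat.sub_add_cancel hkn] at h
      calc (-1:ℝ)^(n-k) = (-1)^(n-k) * ((-1)^k * (-1)^k) := by rw [u1, mul_one]
        _ = ((-1)^(n-k) * (-1)^k) * (-1)^k := by ring
        _ = (-1)^n * (-1)^k := by rw [← h]
    have hzk : z^k = (q^(n*k))⁻¹ := by
      rw [hzdef, inv_pow, ← pow_mul]
    simp only [hf]
    rw [hb2, hb1, ES2, ES1, EA2, EA1, EB2, EB1, hzk]
    have hq_nk : q^(n*k) ≠ 0 := pow_ne_zero _ hq0'
    field_simp
    ring
  rw [hsplit] at hzero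
  have hfn : f n ≠ 0 := by
    simp only [hf]
    apply mul_ne_zero
    apply mul_ne_zero
    apply mul_ne_zero
    · exact pow_ne_zero _ (by norm_num)
    · exact pow_ne_zero _ hq0'
    · exact pow_ne_zero _ hz_ne
    · exact (qbinom_pos hq0 hq1 (by omega)).ne'
  have hsum : ∑ k ∈ Finset.Icc 1 n, (f (n-k) + f (n+k))
      = f n * ∑ k ∈ Finset.Icc 1 n, (-1:ℝ)^k * (1+q^k) * q^(k*(k-1)/2) * ccw q n k := by
    rw [Finset.mul_sum]
    apply Finset.sum_congr rfl
    intro k hk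
    rw [Finset.mem_Icc] at hk
    exact hterm k hk.1 hk.2
  rw [hsum] at hzero
  have := hzero
  field_simp at this
  rcases mul_eq_zero.mp (by linarith : f n * (1 + ∑ k ∈ Finset.Icc 1 n, (-1:ℝ)^k * (1+q^k) * q^(k*(k-1)/2) * ccw q n k) = 0) with h | h
  · exact absurd h hfn
  · linarith

lemma swap_sum {q : ℝ} (p : ℕ) (W : ℕ → ℝ) (n : ℕ) :
    ∑ m ∈ Finset.Icc 1 n, (q^m / (qnum q m)^p) * ∑ k ∈ Finset.Icc 1 m, W k * ccw q m k
      = ∑ k ∈ Finset.Icc 1 n, W k * ∑ m ∈ Finset.Icc 1 n, (q^m/(qnum q m)^p) * ccw q m k := by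
  have h1 : ∀ m ∈ Finset.Icc 1 n, (q^m / (qnum q m)^p) * ∑ k ∈ Finset.Icc 1 m, W k * ccw q m k
      = (q^m / (qnum q m)^p) * ∑ k ∈ Finset.Icc 1 n, W k * ccw q m k := by
    intro m hm
    rw [Finset.mem_Icc] at hm
    congr 1
    apply Finset.sum_subset (Finset.Icc_subset_Icc_right hm.2)
    intro x hx hnx
    rw [Finset.mem_Icc] at hx hnx
    rw [show ccw q m x = 0 from ccw_of_gt (by omega), mul_zero]
  rw [Finset.sum_congr rfl h1]
  simp only [Finset.mul_sum]
  rw [Finset.sum_comm]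
  apply Finset.sum_congr rfl
  intro k _
  apply Finset.sum_congr rfl
  intro m _
  ring

lemma lemA {q : ℝ} (hq0 : 0 < q) (hq1 : q < 1) (b : ℕ) : ∀ n, 1 ≤ n →
    qHstar q (List.replicate b 2) n
      = -∑ k ∈ Finset.Icc 1 n,
          ((-1:ℝ)^k * (1+q^k) * q^(k*(k-1)/2 + b*k) / (qnum q k)^(2*b)) * ccw q n k := by
  induction b with
  | zero =>
      intro n hn
      have hL2 := L2 hq0 hq1 n hn
      have : ∑ k ∈ Finset.Icc 1 n,
          ((-1:ℝ)^k * (1+q^k) * q^(k*(k-1)/2 + 0*k) / (qnum q k)^(2*0)) * ccw q n k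
          = ∑ k ∈ Finset.Icc 1 n, (-1:ℝ)^k * (1+q^k) * q^(k*(k-1)/2) * ccw q n k := by
        apply Finset.sum_congr rfl
        intro k _
        norm_num
      rw [show List.replicate 0 2 = ([] : List ℕ) from rfl]
      show (1:ℝ) = _
      rw [this, hL2]
      norm_num
  | succ b ih =>
      intro n hn
      rw [List.replicate_succ]
      show ∑ m ∈ Finset.Icc 1 n, q ^ m / qnum q m ^ 2 * qHstar q (List.replicate b 2) m = _
      have h1 : ∀ m ∈ Finset.Icc 1 n, q ^ m / qnum q m ^ 2 * qHstar q (List.replicate b 2) m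
          = -((q^m / (qnum q m)^2) * ∑ k ∈ Finset.Icc 1 m,
              ((-1:ℝ)^k * (1+q^k) * q^(k*(k-1)/2 + b*k) / (qnum q k)^(2*b)) * ccw q m k) := by
        intro m hm
        rw [Finset.mem_Icc] at hm
        rw [ih m hm.1]
        ring
      rw [Finset.sum_congr rfl h1, Finset.sum_neg_distrib, swap_sum]
      congr 1
      apply Finset.sum_congr rfl
      intro k hk
      rw [Finset.mem_Icc] at hk
      rw [sumL1 hq0 hq1 k hk.1 n]
      have hnum := qnum_ne hq0 hq1 k hk.1
      have hexp : q^(k*(k-1)/2 + b*k) * q^k = q^(k*(k-1)/2 + (b+1)*k) := by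
        rw [← pow_add]
        congr 1
        have h : (b+1)*k = b*k + k := by ring
        generalize k*(k-1)/2 = A
        omega
      have hpow : (qnum q k)^(2*b) * (qnum q k)^2 = (qnum q k)^(2*(b+1)) := by
        rw [← pow_add]
        congr 1
        try omega
      field_simp
      rw [← hexp, ← hpow]
      ring

lemma stepB {q : ℝ} (hq0 : 0 < q) (hq1 : q < 1) (b n : ℕ) (hn : 1 ≤ n) :
    qHstar q (1 :: List.replicate b 2) n
      = -∑ k ∈ Finset.Icc 1 n,
          ((-1:ℝ)^k * (1+q^k) * q^(k*(k+1)/2 + b*k) / (qnum q k)^(2*b+1)) * ccw q n k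
        - ∑ l ∈ Finset.Icc 1 n,
            ((1+q^l) / qnum q l * q^(l*l)
              * ∑ j ∈ Finset.Icc 1 (l-1),
                  (-1:ℝ)^j * (1+q^j) * q^(b*j) / (q^(j*(j+1)/2) * (qnum q j)^(2*b)))
              * ccw q n l := by
  have hq0' : q ≠ 0 := hq0.ne'
  set W : ℕ → ℝ := fun k => (-1:ℝ)^k * (1+q^k) * q^(k*(k-1)/2 + b*k) / (qnum q k)^(2*b) with hW
  show ∑ m ∈ Finset.Icc 1 n, q ^ m / qnum q m ^ 1 * qHstar q (List.replicate b 2) m = _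
  have h1 : ∀ m ∈ Finset.Icc 1 n, q ^ m / qnum q m ^ 1 * qHstar q (List.replicate b 2) m
      = -((q^m / (qnum q m)^1) * ∑ k ∈ Finset.Icc 1 m, W k * ccw q m k) := by
    intro m hm
    rw [Finset.mem_Icc] at hm
    rw [lemA hq0 hq1 b m hm.1]
    ring
  rw [Finset.sum_congr rfl h1, Finset.sum_neg_distrib, swap_sum]
  have h2 : ∀ k ∈ Finset.Icc 1 n, W k * ∑ m ∈ Finset.Icc 1 n, (q^m/(qnum q m)^1) * ccw q m k
      = W k * (q^k/(qnum q k) * ccw q n k)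
        + ∑ l ∈ Finset.Icc (k+1) n, W k * (ccw q n l * ((1+q^l)/(qnum q l)) * q^(l*l - k*k)) := by
    intro k hk
    rw [Finset.mem_Icc] at hk
    have : ∑ m ∈ Finset.Icc 1 n, (q^m/(qnum q m)^1) * ccw q m k
        = ∑ m ∈ Finset.Icc 1 n, (q^m/(qnum q m)) * ccw q m k := by
      apply Finset.sum_congr rfl; intro m _; rw [pow_one]
    rw [this, sumL3 hq0 hq1 k hk.1 n, mul_add, Finset.mul_sum]
  rw [Finset.sum_congr rfl h2, Finset.sum_add_distrib, neg_add]
  have hfirst : ∑ k ∈ Finset.Icc 1 n, W k * (q^k/(qnum q k) * ccw q n k)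
      = ∑ k ∈ Finset.Icc 1 n,
          ((-1:ℝ)^k * (1+q^k) * q^(k*(k+1)/2 + b*k) / (qnum q k)^(2*b+1)) * ccw q n k := by
    apply Finset.sum_congr rfl
    intro k hk
    rw [Finset.mem_Icc] at hk
    have hnum := qnum_ne hq0 hq1 k hk.1
    have tri : k*(k+1)/2 = k*(k-1)/2 + k := by rw [mul_comm k (k+1)]; exact tri_succ k
    have hexp : q^(k*(k-1)/2 + b*k) * q^k = q^(k*(k+1)/2 + b*k) := by
      rw [← pow_add]
      congr 1
      generalize k*(k-1)/2 = A at tri ⊢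
      generalize k*(k+1)/2 = B at tri ⊢
      generalize b*k = C
      omega
    have hpow : (qnum q k)^(2*b) * (qnum q k)^1 = (qnum q k)^(2*b+1) := by
      rw [← pow_add]
    simp only [hW]
    field_simp
    rw [← hexp, ← hpow]
    ring
  have hsecond : ∑ k ∈ Finset.Icc 1 n,
        ∑ l ∈ Finset.Icc (k+1) n, W k * (ccw q n l * ((1+q^l)/(qnum q l)) * q^(l*l - k*k))
      = ∑ l ∈ Finset.Icc 1 n,
          ((1+q^l) / qnum q l * q^(l*l)
            * ∑ j ∈ Finset.Icc 1 (l-1),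
                (-1:ℝ)^j * (1+q^j) * q^(b*j) / (q^(j*(j+1)/2) * (qnum q j)^(2*b)))
            * ccw q n l := by
    have h3 : ∀ k ∈ Finset.Icc 1 n,
        ∑ l ∈ Finset.Icc (k+1) n, W k * (ccw q n l * ((1+q^l)/(qnum q l)) * q^(l*l-k*k))
        = ∑ l ∈ Finset.Icc 1 n,
            (if k < l then W k * (ccw q n l * ((1+q^l)/(qnum q l)) * q^(l*l-k*k)) else 0) := by
      intro k hk
      rw [Finset.mem_Icc] at hk
      rw [show Finset.Icc (k+1) n = (Finset.Icc 1 n).filter (fun l => k < l) from by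
            ext l; simp only [Finset.mem_filter, Finset.mem_Icc]; omega,
          Finset.sum_filter]
    rw [Finset.sum_congr rfl h3, Finset.sum_comm]
    apply Finset.sum_congr rfl
    intro l hl
    rw [Finset.mem_Icc] at hl
    have h4 : ∑ k ∈ Finset.Icc 1 n,
        (if k < l then W k * (ccw q n l * ((1+q^l)/(qnum q l)) * q^(l*l-k*k)) else 0)
        = ∑ k ∈ Finset.Icc 1 (l-1), W k * (ccw q n l * ((1+q^l)/(qnum q l)) * q^(l*l-k*k)) := by
      rw [← Finset.sum_filter, show (Finset.Icc 1 n).filter (fun k => k < l) = Finset.Icc 1 (l-1) from by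
            ext k; simp only [Finset.mem_filter, Finset.mem_Icc]; omega]
    rw [h4, Finset.mul_sum, Finset.sum_mul]
    apply Finset.sum_congr rfl
    intro k hk
    rw [Finset.mem_Icc] at hk
    have hkl : k < l := by omega
    have hk1 : 1 ≤ k := hk.1
    have hnum := qnum_ne hq0 hq1 k hk1
    have hnuml := qnum_ne hq0 hq1 l (by omega)
    have hkk : k*k ≤ l*l := Nat.mul_le_mul (by omega) (by omega)
    have hE5 := half_sq k
    have E1 : q^(l*l-k*k) = q^(l*l) / q^(k*k) := by
      rw [eq_div_iff (pow_ne_zero _ hq0'), ← pow_add, Nat.sub_add_cancel hkk]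
    have E2 : q^(k*(k-1)/2 + b*k) = q^(b*k) * q^(k*k) / q^(k*(k+1)/2) := by
      rw [eq_div_iff (pow_ne_zero _ hq0'), ← pow_add, ← pow_add]
      congr 1
      generalize k*(k-1)/2 = A at hE5 ⊢
      generalize k*(k+1)/2 = B at hE5 ⊢
      generalize k*k = D at hE5 ⊢
      generalize b*k = C
      omega
    simp only [hW]
    rw [E1, E2]
    have hp1 : q^(k*k) ≠ 0 := pow_ne_zero _ hq0'
    have hp2 : q^(k*(k+1)/2) ≠ 0 := pow_ne_zero _ hq0'
    field_simp
  rw [hfirst, hsecond]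
  ring

lemma stepC {q : ℝ} (hq0 : 0 < q) (hq1 : q < 1) (b : ℕ) (a : ℕ) : ∀ n, 1 ≤ n →
    qHstar q (List.replicate a 2 ++ 1 :: List.replicate b 2) n
    = -∑ k ∈ Finset.Icc 1 n,
        (1 + q ^ k) / qnum q k ^ (2 * (a + b) + 1) * (qbinom q n k / qbinom q (n + k) k) *
          (-1 : ℝ) ^ k * q ^ (k * (k + 1) / 2 + (a + b) * k)
      - ∑ k ∈ Finset.Icc 1 n,
          (1 + q ^ k) / qnum q k ^ (2 * a + 1) * (qbinom q n k / qbinom q (n + k) k) *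
            q ^ (k ^ 2 + a * k) *
            ∑ j ∈ Finset.Icc 1 (k - 1),
              (-1 : ℝ) ^ j * (1 + q ^ j) * q ^ (b * j) /
                (q ^ (j * (j + 1) / 2) * qnum q j ^ (2 * b)) := by
  induction a with
  | zero =>
      intro n hn
      have hB := stepB hq0 hq1 b n hn
      rw [show List.replicate 0 2 ++ 1 :: List.replicate b 2 = 1 :: List.replicate b 2 from rfl,
          hB]
      have e1 : ∑ k ∈ Finset.Icc 1 n,
          ((-1:ℝ)^k * (1+q^k) * q^(k*(k+1)/2 + b*k) / (qnum q k)^(2*b+1)) * ccw q n k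
          = ∑ k ∈ Finset.Icc 1 n,
              (1 + q ^ k) / qnum q k ^ (2 * (0 + b) + 1) * (qbinom q n k / qbinom q (n + k) k) *
                (-1 : ℝ) ^ k * q ^ (k * (k + 1) / 2 + (0 + b) * k) := by
        apply Finset.sum_congr rfl
        intro k _
        rw [show ccw q n k = qbinom q n k / qbinom q (n+k) k from rfl,
            show 2*(0+b)+1 = 2*b+1 from by omega, show (0+b)*k = b*k from by rw [Nat.zero_add]]
        ring
      have e2 : ∑ l ∈ Finset.Icc 1 n,
          ((1+q^l) / qnum q l * q^(l*l)
            * ∑ j ∈ Finset.Icc 1 (l-1),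
                (-1:ℝ)^j * (1+q^j) * q^(b*j) / (q^(j*(j+1)/2) * (qnum q j)^(2*b))) * ccw q n l
          = ∑ k ∈ Finset.Icc 1 n,
              (1 + q ^ k) / qnum q k ^ (2 * 0 + 1) * (qbinom q n k / qbinom q (n + k) k) *
                q ^ (k ^ 2 + 0 * k) *
                ∑ j ∈ Finset.Icc 1 (k - 1),
                  (-1 : ℝ) ^ j * (1 + q ^ j) * q ^ (b * j) /
                    (q ^ (j * (j + 1) / 2) * qnum q j ^ (2 * b)) := by
        apply Finset.sum_congr rfl
        intro k _
        rw [show ccw q n k = qbinom q n k / qbinom q (n+k) k from rfl,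
            show 2*0+1 = 1 from rfl, pow_one,
            show k^2 + 0*k = k*k from by rw [pow_two]; simp]
        ring
      rw [e1, e2]
  | succ a ih =>
      intro n hn
      set T : ℕ → ℝ := fun k => ∑ j ∈ Finset.Icc 1 (k - 1),
          (-1 : ℝ) ^ j * (1 + q ^ j) * q ^ (b * j) /
            (q ^ (j * (j + 1) / 2) * qnum q j ^ (2 * b)) with hT
      set W : ℕ → ℝ := fun k =>
          (1 + q ^ k) / qnum q k ^ (2 * (a + b) + 1) * (-1 : ℝ) ^ k
            * q ^ (k * (k + 1) / 2 + (a + b) * k)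
          + (1 + q ^ k) / qnum q k ^ (2 * a + 1) * q ^ (k ^ 2 + a * k) * T k with hW
      have hform : ∀ m, 1 ≤ m →
          qHstar q (List.replicate a 2 ++ 1 :: List.replicate b 2) m
            = -∑ k ∈ Finset.Icc 1 m, W k * ccw q m k := by
        intro m hm
        rw [ih m hm]
        have : ∑ k ∈ Finset.Icc 1 m, W k * ccw q m k
            = (∑ k ∈ Finset.Icc 1 m,
                (1 + q ^ k) / qnum q k ^ (2 * (a + b) + 1) * (qbinom q m k / qbinom q (m + k) k) *
                  (-1 : ℝ) ^ k * q ^ (k * (k + 1) / 2 + (a + b) * k))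
              + ∑ k ∈ Finset.Icc 1 m,
                (1 + q ^ k) / qnum q k ^ (2 * a + 1) * (qbinom q m k / qbinom q (m + k) k) *
                  q ^ (k ^ 2 + a * k) * T k := by
          rw [← Finset.sum_add_distrib]
          apply Finset.sum_congr rfl
          intro k _
          rw [show ccw q m k = qbinom q m k / qbinom q (m+k) k from rfl, hW]
          ring
        rw [this]
        ring
      rw [List.replicate_succ, List.cons_append]
      show ∑ m ∈ Finset.Icc 1 n,
          q ^ m / qnum q m ^ 2 * qHstar q (List.replicate a 2 ++ 1 :: List.replicate b 2) m = _
      have h1 : ∀ m ∈ Finset.Icc 1 n,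
          q ^ m / qnum q m ^ 2 * qHstar q (List.replicate a 2 ++ 1 :: List.replicate b 2) m
          = -((q^m / (qnum q m)^2) * ∑ k ∈ Finset.Icc 1 m, W k * ccw q m k) := by
        intro m hm
        rw [Finset.mem_Icc] at hm
        rw [hform m hm.1]
        ring
      rw [Finset.sum_congr rfl h1, Finset.sum_neg_distrib, swap_sum]
      have h2 : ∀ k ∈ Finset.Icc 1 n,
          W k * ∑ m ∈ Finset.Icc 1 n, (q^m/(qnum q m)^2) * ccw q m k
          = ((1 + q ^ k) / qnum q k ^ (2 * (a+1+b) + 1) * (-1 : ℝ) ^ k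
              * q ^ (k * (k + 1) / 2 + (a+1+b) * k)) * ccw q n k
            + ((1 + q ^ k) / qnum q k ^ (2 * (a+1) + 1) * q ^ (k ^ 2 + (a+1) * k) * T k)
              * ccw q n k := by
        intro k hk
        rw [Finset.mem_Icc] at hk
        rw [sumL1 hq0 hq1 k hk.1 n]
        have hnum := qnum_ne hq0 hq1 k hk.1
        have hexp1 : q^(k*(k+1)/2 + (a+b)*k) * q^k = q^(k*(k+1)/2 + (a+1+b)*k) := by
          rw [← pow_add]
          congr 1
          have h : (a+1+b)*k = (a+b)*k + k := by ring
          generalize k*(k+1)/2 = A at h ⊢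
          generalize (a+b)*k = C at h ⊢
          generalize (a+1+b)*k = C' at h ⊢
          omega
        have hexp2 : q^(k^2 + a*k) * q^k = q^(k^2 + (a+1)*k) := by
          rw [← pow_add]
          congr 1
          have h : (a+1)*k = a*k + k := by ring
          generalize k^2 = A at h ⊢
          generalize a*k = C at h ⊢
          generalize (a+1)*k = C' at h ⊢
          omega
        have hpow1 : (qnum q k)^(2*(a+b)+1) * (qnum q k)^2 = (qnum q k)^(2*(a+1+b)+1) := by
          rw [← pow_add]
          congr 1
          try omega
        have hpow2 : (qnum q k)^(2*a+1) * (qnum q k)^2 = (qnum q k)^(2*(a+1)+1) := by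
          rw [← pow_add]
          congr 1
          try omega
        rw [hW]
        field_simp
        rw [← hexp1, ← hexp2, ← hpow1, ← hpow2]
        ring
      rw [Finset.sum_congr rfl h2, Finset.sum_add_distrib, neg_add]
      congr 1
      · congr 1
        apply Finset.sum_congr rfl
        intro k _
        rw [show ccw q n k = qbinom q n k / qbinom q (n+k) k from rfl]
        ring
      · congr 1
        apply Finset.sum_congr rfl
        intro k _
        rw [show ccw q n k = qbinom q n k / qbinom q (n+k) k from rfl, hT]
        ring

end Aux

theorem stmt7 (q : ℝ) (hq0 : 0 < q) (hq1 : q < 1) (a b n : ℕ) (hb : 1 ≤ b) (hn : 1 ≤ n) :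
    qHstar q (List.replicate a 2 ++ 1 :: List.replicate b 2) n
    = -∑ k ∈ Finset.Icc 1 n,
        (1 + q ^ k) / qnum q k ^ (2 * (a + b) + 1) * (qbinom q n k / qbinom q (n + k) k) *
          (-1 : ℝ) ^ k * q ^ (k * (k + 1) / 2 + (a + b) * k)
      - ∑ k ∈ Finset.Icc 1 n,
          (1 + q ^ k) / qnum q k ^ (2 * a + 1) * (qbinom q n k / qbinom q (n + k) k) *
            q ^ (k ^ 2 + a * k) *
            ∑ j ∈ Finset.Icc 1 (k - 1),
              (-1 : ℝ) ^ j * (1 + q ^ j) * q ^ (b * j) /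
                (q ^ (j * (j + 1) / 2) * qnum q j ^ (2 * b)) := by
  exact stepC hq0 hq1 b a n hn
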